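/- If for all ε ∈ (0,1), Pr{Viol(θ_SO) > ε} ≤ B(N,ε,n_θ) where B(N,ε,n) = Σ_{k=0}^{n-1} C(N,k) ε^k (1-ε)^{N-k}, and N ≥ (e/(ε(e-1)))(ln(1/δ) + n_θ - 1), then B(N,ε,n_θ) ≤ δ, i.e., the sample complexity bound implies the binomial tail bound is at most δ. -/

import Mathlib

open Finset in
/-- The binomial tail `B(N, ε, n) = ∑_{k=0}^{n-1} C(N,k) ε^k (1-ε)^{N-k}`. -/
def binTail (N : ℕ) (ε : ℝ) (n : ℕ) : ℝ :=
  ∑ k ∈ Finset.range n, (N.choose k : ℝ) * ε ^ k * (1 - ε) ^ (N - k)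

open Finset

/-- If `N ≥ (e/(ε(e-1)))(ln(1/δ) + n_θ - 1)` then `B(N, ε, n_θ) ≤ δ`. -/
theorem stmt_3 (ε δ : ℝ) (hε : ε ∈ Set.Ioo (0 : ℝ) 1) (hδ : δ ∈ Set.Ioo (0 : ℝ) 1)
    (nθ : ℕ) (hn : 1 ≤ nθ) (N : ℕ) (hN : 0 < N)
    (h : (Real.exp 1 / (ε * (Real.exp 1 - 1))) * (Real.log (1 / δ) + nθ - 1) ≤ N) :
    binTail N ε nθ ≤ δ := by
  obtain ⟨hε0, hε1⟩ := hε
  obtain ⟨hδ0, hδ1⟩ := hδ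
  set e := Real.exp 1 with he
  have he1 : 1 < e := by
    have := Real.add_one_le_exp (1 : ℝ)
    have h2 := Real.exp_pos (1:ℝ)
    nlinarith [Real.add_one_lt_exp (x := (1:ℝ)) (by norm_num)]
  have he0 : 0 < e := by linarith
  set x : ℝ := ε / e with hx
  set y : ℝ := 1 - ε with hy
  have hx0 : 0 < x := div_pos hε0 he0
  have hy0 : 0 < y := by simp [hy]; linarith
  -- Step B
  have hfull : ∑ k ∈ range (N+1), (N.choose k : ℝ) * x^k * y^(N-k) = (x+y)^N := by
    rw [add_pow]
    exact Finset.sum_congr rfl (fun k hk => by ring)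
  have hsum : (∑ k ∈ range nθ, (N.choose k : ℝ) * x^k * y^(N-k)) ≤ (x+y)^N := by
    rcases le_total nθ (N+1) with hm | hm
    · rw [← hfull]
      apply Finset.sum_le_sum_of_subset_of_nonneg (Finset.range_subset_range.mpr hm)
      intro i _ _
      positivity
    · rw [← hfull]
      refine le_of_eq (Finset.sum_subset (Finset.range_subset_range.mpr hm) ?_).symm
      intro k hk hk2
      simp only [Finset.mem_range, not_lt] at hk2
      have : N.choose k = 0 := Nat.choose_eq_zero_of_lt (by omega)
      simp [this]
  -- Step A
  have hA : binTail N ε nθ ≤ Real.exp ((nθ : ℝ) - 1) * ∑ k ∈ range nθ, (N.choose k : ℝ) * x^k * y^(N-k) := by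
    rw [binTail, Finset.mul_sum]
    apply Finset.sum_le_sum
    intro k hk
    have hk' : (k : ℝ) ≤ (nθ : ℝ) - 1 := by
      have := Finset.mem_range.mp hk
      have : k ≤ nθ - 1 := by omega
      have h2 : ((k:ℝ)) ≤ ((nθ - 1 : ℕ) : ℝ) := by exact_mod_cast this
      rwa [Nat.cast_sub hn, Nat.cast_one] at h2
    have hek : e ^ k ≤ Real.exp ((nθ : ℝ) - 1) := by
      rw [he, ← Real.exp_nat_mul]
      exact Real.exp_le_exp.mpr (by simpa using hk')
    have hεk : ε ^ k = e ^ k * x ^ k := by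
      rw [hx, ← mul_pow]
      congr 1
      field_simp
    calc (N.choose k : ℝ) * ε^k * y^(N-k)
        = e^k * ((N.choose k : ℝ) * x^k * y^(N-k)) := by rw [hεk]; ring
      _ ≤ Real.exp ((nθ : ℝ) - 1) * ((N.choose k : ℝ) * x^k * y^(N-k)) := by
          apply mul_le_mul_of_nonneg_right hek
          positivity
  -- Step C
  have hxy : x + y = 1 + (-(ε * (1 - 1/e))) := by rw [hx, hy]; field_simp; ring
  have hC : (x+y)^N ≤ Real.exp (-(N * (ε * (1 - 1/e)))) := by
    have h1 : x + y ≤ Real.exp (-(ε * (1 - 1/e))) := by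
      rw [hxy]
      have := Real.add_one_le_exp (-(ε * (1 - 1/e)))
      linarith
    have h2 : (x+y)^N ≤ (Real.exp (-(ε * (1 - 1/e))))^N :=
      pow_le_pow_left₀ (by positivity) h1 N
    calc (x+y)^N ≤ (Real.exp (-(ε * (1 - 1/e))))^N := h2
      _ = Real.exp ((N:ℝ) * (-(ε * (1 - 1/e)))) := by rw [← Real.exp_nat_mul]
      _ = Real.exp (-(N * (ε * (1 - 1/e)))) := by ring_nf
  -- Step D
  have hD : Real.exp ((nθ : ℝ) - 1) * Real.exp (-(N * (ε * (1 - 1/e)))) ≤ δ := by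
    rw [← Real.exp_add]
    rw [← Real.exp_log hδ0]
    apply Real.exp_le_exp.mpr
    -- need (nθ - 1) - N ε (1-1/e) ≤ log δ
    have hlog : Real.log (1/δ) = - Real.log δ := by
      rw [one_div, Real.log_inv]
    have hc : 0 < ε * (e - 1) := by nlinarith
    have hmul : Real.log (1 / δ) + (nθ:ℝ) - 1 ≤ (N:ℝ) * (ε * (e-1) / e) := by
      have := mul_le_mul_of_nonneg_right h (le_of_lt (by positivity : (0:ℝ) < ε * (e-1)/e))
      calc Real.log (1 / δ) + (nθ:ℝ) - 1
          = (e / (ε * (e - 1))) * (Real.log (1 / δ) + (nθ:ℝ) - 1) * (ε * (e-1)/e) := by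
            field_simp [(sub_pos.mpr he1).ne']
        _ ≤ (N:ℝ) * (ε * (e-1)/e) := this
    have hee : ε * (e - 1) / e = ε * (1 - 1/e) := by field_simp
    rw [hee] at hmul
    rw [hlog] at hmul
    linarith
  calc binTail N ε nθ ≤ Real.exp ((nθ : ℝ) - 1) * ∑ k ∈ range nθ, (N.choose k : ℝ) * x^k * y^(N-k) := hA
    _ ≤ Real.exp ((nθ : ℝ) - 1) * (x+y)^N := by
        apply mul_le_mul_of_nonneg_left hsum (le_of_lt (Real.exp_pos _))
    _ ≤ Real.exp ((nθ : ℝ) - 1) * Real.exp (-(N * (ε * (1 - 1/e)))) := by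
        apply mul_le_mul_of_nonneg_left hC (le_of_lt (Real.exp_pos _))
    _ ≤ δ := hD
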